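/- Let M be a symmetric positive definite 2n×2n real matrix and r > 0, and let Ω_M = {z ∈ ℝ^{2n} : ⟨Mz, z⟩ ≤ r²}. Then the symplectic ℏ-polar dual of Ω_M is Ω_M^{ℏ,σ} = {z ∈ ℝ^{2n} : ⟨−J M⁻¹ J z, z⟩ ≤ ℏ²/r²}, where J is the standard symplectic matrix. -/

import Mathlib

open MeasureTheory Real Metric
open scoped RealInnerProductSpace Pointwise
open Matrix

noncomputable section

/-- `ℝⁿ` with its Euclidean structure. -/
abbrev En (n : ℕ) := EuclideanSpace ℝ (Fin n)

/-- The phase space `ℝ²ⁿ = ℝⁿ × ℝⁿ` with its Euclidean structure, the first block of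
coordinates being the positions `x` and the second block the momenta `p`. -/
abbrev PS (n : ℕ) := EuclideanSpace ℝ (Fin n ⊕ Fin n)

/-- The standard symplectic matrix `J = [[0, I], [-I, 0]]`. -/
def Jmat (n : ℕ) : Matrix (Fin n ⊕ Fin n) (Fin n ⊕ Fin n) ℝ :=
  Matrix.fromBlocks 0 1 (-1) 0

/-- The standard symplectic form `σ(z, z') = ⟨Jz, z'⟩`. -/
def symp (n : ℕ) (z z' : PS n) : ℝ := ⟪(Matrix.toEuclideanLin (Jmat n)) z, z'⟫

/-- The quadratic form `z ↦ ⟨Mz, z⟩`. -/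
def qf {m : Type*} [Fintype m] [DecidableEq m] (M : Matrix m m ℝ)
    (z : EuclideanSpace ℝ m) : ℝ := ⟪(Matrix.toEuclideanLin M) z, z⟫

/-- The symplectic `ℏ`-polar dual `Ω^{ℏ,σ} = {z' : ∀ z ∈ Ω, σ(z, z') ≤ ℏ}`. -/
def sympDual (n : ℕ) (ℏ : ℝ) (Ω : Set (PS n)) : Set (PS n) :=
  {z' | ∀ z ∈ Ω, symp n z z' ≤ ℏ}

/-- A linear automorphism of `ℝ²ⁿ` is symplectic if it preserves the symplectic form. -/
def IsSymplectic {n : ℕ} (S : PS n ≃ₗ[ℝ] PS n) : Prop :=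
  ∀ z z', symp n (S z) (S z') = symp n z z'

-- bridging
lemma qf_eq {m : Type*} [Fintype m] [DecidableEq m] (M : Matrix m m ℝ)
    (z : EuclideanSpace ℝ m) :
    qf M z = (M *ᵥ (WithLp.equiv 2 (m → ℝ) z)) ⬝ᵥ (WithLp.equiv 2 (m → ℝ) z) := by
  simp [qf, PiLp.inner_apply, dotProduct, RCLike.inner_apply, conj_trivial]
  simp only [mul_comm]

lemma symp_eq (n : ℕ) (z z' : PS n) :
    symp n z z' = (Jmat n *ᵥ (WithLp.equiv 2 _ z)) ⬝ᵥ (WithLp.equiv 2 _ z') := by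
  simp [symp, PiLp.inner_apply, dotProduct, RCLike.inner_apply, conj_trivial]
  simp only [mul_comm]

lemma Jmat_transpose (n : ℕ) : (Jmat n)ᵀ = -(Jmat n) := by
  simp [Jmat, Matrix.fromBlocks_transpose, Matrix.fromBlocks_neg]

-- core lemma
lemma core {m : Type*} [Fintype m] [DecidableEq m] {M : Matrix m m ℝ} (hM : M.PosDef)
    {r ℏ : ℝ} (hr : 0 < r) (hℏ : 0 < ℏ) (u : m → ℝ) :
    (∀ z : m → ℝ, (M *ᵥ z) ⬝ᵥ z ≤ r ^ 2 → z ⬝ᵥ u ≤ ℏ) ↔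
      (M⁻¹ *ᵥ u) ⬝ᵥ u ≤ ℏ ^ 2 / r ^ 2 := by
  have hMsymm : Mᵀ = M := by
    have := hM.isHermitian.eq
    simpa [Matrix.conjTranspose_eq_transpose_of_trivial] using this
  have hinv : M.PosDef → True := fun _ => trivial
  have hMu : M *ᵥ (M⁻¹ *ᵥ u) = u := by
    rw [Matrix.mulVec_mulVec, Matrix.mul_nonsing_inv _ (Matrix.isUnit_iff_isUnit_det _ |>.1 hM.isUnit), Matrix.one_mulVec]
  set c := (M⁻¹ *ᵥ u) ⬝ᵥ u with hc
  have hc0 : 0 ≤ c := by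
    have := hM.inv.posSemidef.dotProduct_mulVec_nonneg u
    simpa [hc, dotProduct_comm] using this
  constructor
  · intro h
    rcases eq_or_lt_of_le hc0 with h0 | h0
    · rw [← h0]; positivity
    · set sc := Real.sqrt c with hscdef
      have hsc0 : 0 < sc := Real.sqrt_pos.mpr h0
      have hsc2 : sc ^ 2 = c := Real.sq_sqrt hc0
      set z : m → ℝ := (r / sc) • (M⁻¹ *ᵥ u) with hzdef
      have e : (M *ᵥ z) ⬝ᵥ z = (r / sc) ^ 2 * c := by
        simp only [hzdef, Matrix.mulVec_smul, smul_dotProduct, dotProduct_smul,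
          smul_eq_mul, hMu]
        rw [dotProduct_comm, ← hc]
        ring
      have hQr : (M *ᵥ z) ⬝ᵥ z ≤ r ^ 2 := by
        rw [e]
        have : (r / sc) ^ 2 * c = r ^ 2 := by
          rw [← hsc2]; field_simp
        rw [this]
      have hzu := h z hQr
      have e2 : z ⬝ᵥ u = r * sc := by
        simp only [hzdef, smul_dotProduct, smul_eq_mul, ← hc, ← hsc2]
        field_simp
      rw [e2] at hzu
      have hsq : (r * sc) ^ 2 ≤ ℏ ^ 2 := pow_le_pow_left₀ (mul_pos hr hsc0).le hzu 2
      rw [le_div_iff₀ (by positivity)]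
      nlinarith [hsq, hsc2]
  · intro h z hz
    set v := M⁻¹ *ᵥ u with hv
    set s : ℝ := r ^ 2 / ℏ with hs
    have hs0 : 0 < s := by positivity
    have key : 0 ≤ (M *ᵥ (z - s • v)) ⬝ᵥ (z - s • v) := by
      have := hM.posSemidef.dotProduct_mulVec_nonneg (z - s • v)
      simpa [dotProduct_comm] using this
    have e1 : (M *ᵥ v) ⬝ᵥ z = u ⬝ᵥ z := by rw [hMu]
    have e2 : (M *ᵥ z) ⬝ᵥ v = u ⬝ᵥ z := by
      rw [dotProduct_comm, Matrix.dotProduct_mulVec, ← Matrix.mulVec_transpose,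
        hMsymm, hMu, dotProduct_comm]
    have e3 : (M *ᵥ v) ⬝ᵥ v = c := by rw [hMu, hc, dotProduct_comm]
    have expand : (M *ᵥ (z - s • v)) ⬝ᵥ (z - s • v)
        = (M *ᵥ z) ⬝ᵥ z - 2 * s * (u ⬝ᵥ z) + s ^ 2 * c := by
      simp [Matrix.mulVec_sub, Matrix.mulVec_smul, sub_dotProduct,
        dotProduct_sub, smul_dotProduct, dotProduct_smul,
        smul_eq_mul, e1, e2, e3]
      ring
    rw [expand] at key
    have hzu : z ⬝ᵥ u = u ⬝ᵥ z := dotProduct_comm _ _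
    rw [hzu]
    have h1 : s ^ 2 * c ≤ r ^ 2 := by
      have he : s ^ 2 * (ℏ ^ 2 / r ^ 2) = r ^ 2 := by
        rw [hs]; field_simp
      nlinarith [sq_nonneg s]
    have h2 : 2 * s * (u ⬝ᵥ z) ≤ 2 * s * ℏ := by
      have hsh : s * ℏ = r ^ 2 := by rw [hs]; field_simp
      nlinarith
    exact le_of_mul_le_mul_left h2 (by positivity)

lemma key_adj (n : ℕ) (a b : (Fin n ⊕ Fin n) → ℝ) :
    (Jmat n *ᵥ a) ⬝ᵥ b = a ⬝ᵥ ((Jmat n)ᵀ *ᵥ b) :=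
  calc (Jmat n *ᵥ a) ⬝ᵥ b = b ⬝ᵥ (Jmat n *ᵥ a) := dotProduct_comm _ _
    _ = (b ᵥ* Jmat n) ⬝ᵥ a := Matrix.dotProduct_mulVec _ _ _
    _ = ((Jmat n)ᵀ *ᵥ b) ⬝ᵥ a := by rw [Matrix.mulVec_transpose]
    _ = a ⬝ᵥ ((Jmat n)ᵀ *ᵥ b) := dotProduct_comm _ _

/-- the symplectic `ℏ`-polar dual of the ellipsoid `Ω_M = {⟨Mz,z⟩ ≤ r²}`
(`M` symmetric positive definite) is the ellipsoid `{⟨-JM⁻¹Jz, z⟩ ≤ ℏ²/r²}`. -/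
theorem stmt2 (n : ℕ) (ℏ r : ℝ) (hℏ : 0 < ℏ) (hr : 0 < r)
    (M : Matrix (Fin n ⊕ Fin n) (Fin n ⊕ Fin n) ℝ) (hM : M.PosDef) :
    sympDual n ℏ {z | qf M z ≤ r ^ 2}
      = {z | qf (-(Jmat n * M⁻¹ * Jmat n)) z ≤ ℏ ^ 2 / r ^ 2} := by
  ext z'
  set w : (Fin n ⊕ Fin n) → ℝ := WithLp.equiv 2 _ z' with hw
  set u : (Fin n ⊕ Fin n) → ℝ := (Jmat n)ᵀ *ᵥ w with hu
  have hmem : z' ∈ sympDual n ℏ {z | qf M z ≤ r ^ 2} ↔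
      ∀ z : (Fin n ⊕ Fin n) → ℝ, (M *ᵥ z) ⬝ᵥ z ≤ r ^ 2 → z ⬝ᵥ u ≤ ℏ := by
    constructor
    · intro h z hz
      have hmm := h ((WithLp.equiv 2 _).symm z)
        (by rw [Set.mem_setOf_eq, qf_eq]; simpa using hz)
      rw [symp_eq] at hmm
      simpa [hu, key_adj, ← hw] using hmm
    · intro h z hz
      rw [symp_eq, key_adj, ← hw, ← hu]
      rw [Set.mem_setOf_eq, qf_eq] at hz
      exact h _ hz
  have hq : qf (-(Jmat n * M⁻¹ * Jmat n)) z' = (M⁻¹ *ᵥ u) ⬝ᵥ u := by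
    rw [qf_eq, ← hw, hu, Jmat_transpose]
    simp only [Matrix.neg_mulVec, ← Matrix.mulVec_mulVec, neg_dotProduct,
      dotProduct_neg, Matrix.mulVec_neg, neg_neg]
    rw [key_adj, Jmat_transpose, Matrix.neg_mulVec, dotProduct_neg, neg_neg,
      dotProduct_comm]
  rw [Set.mem_setOf_eq, hmem, hq, core hM hr hℏ u]
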